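/- For every fixed t > 0, lim_{α→0⁺} ∫₀^t ∫₀^s F_α(s−r) (4π(s−r))^{−1/2} dr ds = ∫₀^t ∫₀^s (4π(s−r))^{−1/2} dr ds = (2/(3√π)) t^{3/2}. Consequently, the variance of the limiting occupation-time process Γ_α converges, as α → 0, to (8/3)(χ(ρ)/√π) t^{3/2}, the variance of Γ_0. -/

import Mathlib

open MeasureTheory Real Filter


lemma gauss_m1 {u : ℝ} (hu : 0 < u) :
    ∫ z in Set.Ioi (0:ℝ), z * Real.exp (-z ^ 2 / (4 * u)) = 2 * u := by
  have hb : (0:ℝ) < 1/(4*u) := by positivity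
  have h := integral_rpow_mul_exp_neg_mul_rpow (p := 2) (q := 1) (b := 1/(4*u))
    two_pos (by norm_num) hb
  have heq : (fun z : ℝ => z ^ (1:ℝ) * Real.exp (-(1/(4*u)) * z ^ (2:ℝ))) =
      fun z : ℝ => z * Real.exp (-z ^ 2 / (4 * u)) := by
    funext z
    rw [Real.rpow_one, show (2:ℝ) = ((2:ℕ):ℝ) by norm_num, Real.rpow_natCast]
    congr 1
    ring
  rw [heq] at h
  rw [h, show (-(1+1)/2 : ℝ) = -1 by norm_num, Real.rpow_neg_one,
    show ((1+1)/2:ℝ) = 1 by norm_num, Real.Gamma_one]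
  field_simp
  ring

lemma sqrt_four_mul (x : ℝ) (hx : 0 ≤ x) : Real.sqrt (4 * x) = 2 * Real.sqrt x := by
  rw [show (4:ℝ)*x = 2^2*x by ring, Real.sqrt_mul (by positivity), Real.sqrt_sq (by norm_num)]

lemma gauss_m2 {u : ℝ} (hu : 0 < u) :
    ∫ z in Set.Ioi (0:ℝ), z ^ 2 * Real.exp (-z ^ 2 / (4 * u))
      = 2 * Real.sqrt π * u * Real.sqrt u := by
  have hb : (0:ℝ) < 1/(4*u) := by positivity
  have h := integral_rpow_mul_exp_neg_mul_rpow (p := 2) (q := 2) (b := 1/(4*u))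
    two_pos (by norm_num) hb
  have heq : (fun z : ℝ => z ^ (2:ℝ) * Real.exp (-(1/(4*u)) * z ^ (2:ℝ))) =
      fun z : ℝ => z ^ 2 * Real.exp (-z ^ 2 / (4 * u)) := by
    funext z
    rw [show (2:ℝ) = ((2:ℕ):ℝ) by norm_num, Real.rpow_natCast]
    congr 1
    ring
  rw [heq] at h
  rw [h]
  have h4u : (0:ℝ) < 4*u := by positivity
  have hG : Real.Gamma ((2+1)/2) = Real.sqrt π / 2 := by
    rw [show ((2+1)/2 : ℝ) = 1/2 + 1 by norm_num, Real.Gamma_add_one (by norm_num),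
      Real.Gamma_one_half_eq]
    ring
  rw [hG, show (-(2+1)/2 : ℝ) = -(3/2) by norm_num, one_div (4*u),
    Real.inv_rpow h4u.le, Real.rpow_neg h4u.le, inv_inv,
    show ((3:ℝ)/2) = 1 + 1/2 by norm_num, Real.rpow_add h4u, Real.rpow_one,
    ← Real.sqrt_eq_rpow, sqrt_four_mul u hu.le]
  ring_nf

/-- `F_α(t) = (1/(2t)) ∫₀^∞ z e^{−z²/(4t) − 2αz} dz`, appearing in the variance of the
limiting occupation-time process of the slow-bond exclusion process at `β = 1`. -/
noncomputable def Falpha (α t : ℝ) : ℝ :=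
  (1 / (2 * t)) * ∫ z in Set.Ioi (0:ℝ), z * Real.exp (-z ^ 2 / (4 * t) - 2 * α * z)

lemma int_m1 {u : ℝ} (hu : 0 < u) :
    IntegrableOn (fun z : ℝ => z * Real.exp (-z ^ 2 / (4 * u))) (Set.Ioi 0) := by
  have hb : (0:ℝ) < 1/(4*u) := by positivity
  have := integrableOn_rpow_mul_exp_neg_mul_sq hb (s := 1) (by norm_num)
  apply this.congr_fun ?_ measurableSet_Ioi
  intro z hz
  simp only [Real.rpow_one]
  congr 1
  ring

lemma int_m2 {u : ℝ} (hu : 0 < u) :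
    IntegrableOn (fun z : ℝ => z ^ 2 * Real.exp (-z ^ 2 / (4 * u))) (Set.Ioi 0) := by
  have hb : (0:ℝ) < 1/(4*u) := by positivity
  have := integrableOn_rpow_mul_exp_neg_mul_sq hb (s := 2) (by norm_num)
  apply this.congr_fun ?_ measurableSet_Ioi
  intro z hz
  simp only [show ∀ x:ℝ, x ^ (2:ℝ) = x ^ (2:ℕ) from fun x => by
    rw [show (2:ℝ) = ((2:ℕ):ℝ) by norm_num, Real.rpow_natCast]]
  congr 1
  ring

lemma int_falpha {α u : ℝ} (hα : 0 ≤ α) (hu : 0 < u) :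
    IntegrableOn (fun z : ℝ => z * Real.exp (-z ^ 2 / (4 * u) - 2 * α * z)) (Set.Ioi 0) := by
  apply (int_m1 hu).mono' ?_ ?_
  · apply Measurable.aestronglyMeasurable
    fun_prop
  · filter_upwards [ae_restrict_mem measurableSet_Ioi] with z hz
    simp only [Set.mem_Ioi] at hz
    rw [Real.norm_eq_abs, abs_of_nonneg (by positivity)]
    have h1 : -z ^ 2 / (4 * u) - 2 * α * z ≤ -z ^ 2 / (4 * u) := by nlinarith
    exact mul_le_mul_of_nonneg_left (Real.exp_le_exp.2 h1) hz.le

lemma Ialpha_le {α u : ℝ} (hα : 0 ≤ α) (hu : 0 < u) :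
    (∫ z in Set.Ioi (0:ℝ), z * Real.exp (-z ^ 2 / (4 * u) - 2 * α * z)) ≤ 2 * u := by
  rw [← gauss_m1 hu]
  apply setIntegral_mono_on (int_falpha hα hu) (int_m1 hu) measurableSet_Ioi
  intro z hz
  simp only [Set.mem_Ioi] at hz
  have h1 : -z ^ 2 / (4 * u) - 2 * α * z ≤ -z ^ 2 / (4 * u) := by nlinarith
  exact mul_le_mul_of_nonneg_left (Real.exp_le_exp.2 h1) hz.le

lemma Ialpha_ge {α u : ℝ} (hα : 0 ≤ α) (hu : 0 < u) :
    2 * u - 4 * Real.sqrt π * α * u * Real.sqrt u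
      ≤ ∫ z in Set.Ioi (0:ℝ), z * Real.exp (-z ^ 2 / (4 * u) - 2 * α * z) := by
  have key : (∫ z in Set.Ioi (0:ℝ), (z * Real.exp (-z ^ 2 / (4 * u))
        - z * Real.exp (-z ^ 2 / (4 * u) - 2 * α * z)))
      ≤ ∫ z in Set.Ioi (0:ℝ), (2 * α) * (z ^ 2 * Real.exp (-z ^ 2 / (4 * u))) := by
    apply setIntegral_mono_on ((int_m1 hu).sub (int_falpha hα hu))
      ((int_m2 hu).const_mul _) measurableSet_Ioi
    intro z hz
    simp only [Set.mem_Ioi] at hz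
    have e1 : Real.exp (-z ^ 2 / (4 * u) - 2 * α * z)
        = Real.exp (-z ^ 2 / (4 * u)) * Real.exp (-(2 * α * z)) := by
      rw [← Real.exp_add]; ring_nf
    have e2 : 1 - 2 * α * z ≤ Real.exp (-(2 * α * z)) := by
      have := Real.add_one_le_exp (-(2 * α * z)); linarith
    simp only [Pi.sub_apply]
    rw [e1]
    have he : 0 < Real.exp (-z ^ 2 / (4 * u)) := Real.exp_pos _
    nlinarith [mul_pos hz he]
  rw [integral_sub (int_m1 hu) (int_falpha hα hu), integral_const_mul, gauss_m1 hu,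
    gauss_m2 hu] at key
  nlinarith [key]

lemma Falpha_nonneg {α u : ℝ} (hu : 0 ≤ u) : 0 ≤ Falpha α u := by
  unfold Falpha
  apply mul_nonneg (by positivity)
  apply setIntegral_nonneg measurableSet_Ioi
  intro z hz
  simp only [Set.mem_Ioi] at hz
  positivity

lemma Falpha_le_one {α u : ℝ} (hα : 0 ≤ α) (hu : 0 ≤ u) : Falpha α u ≤ 1 := by
  rcases eq_or_lt_of_le hu with h | h
  · simp [Falpha, ← h]
  · unfold Falpha
    have h2 := Ialpha_le hα h
    rw [div_mul_eq_mul_div, one_mul, div_le_one (by positivity)]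
    calc (∫ z in Set.Ioi (0:ℝ), z * Real.exp (-z ^ 2 / (4 * u) - 2 * α * z)) ≤ 2 * u := h2
    _ ≤ 2 * u := le_refl _

lemma Falpha_ge {α u : ℝ} (hα : 0 ≤ α) (hu : 0 < u) :
    1 - 2 * Real.sqrt π * α * Real.sqrt u ≤ Falpha α u := by
  unfold Falpha
  have h2 := Ialpha_ge hα hu
  rw [div_mul_eq_mul_div, one_mul, le_div_iff₀ (by positivity)]
  nlinarith [h2]

lemma measurable_Falpha (α : ℝ) : Measurable (Falpha α) := by
  unfold Falpha
  apply Measurable.mul (by fun_prop)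
  have hsm : StronglyMeasurable fun p : ℝ × ℝ =>
      p.2 * Real.exp (-p.2 ^ 2 / (4 * p.1) - 2 * α * p.2) := by
    apply Measurable.stronglyMeasurable
    fun_prop
  exact hsm.integral_prod_right'.measurable

/-- `lim_{α→0⁺} ∫₀^t ∫₀^s F_α(s−r)(4π(s−r))^{−1/2} dr ds
= ∫₀^t ∫₀^s (4π(s−r))^{−1/2} dr ds = (2/(3√π)) t^{3/2}`; consequently the variance of `Γ_α`
converges, as `α → 0`, to `(8/3)(χ(ρ)/√π) t^{3/2}`, the variance of `Γ_0`. -/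
theorem variance_tendsto_zero (t : ℝ) (ht : 0 < t) :
    Filter.Tendsto (fun α : ℝ => ∫ s in (0:ℝ)..t, ∫ r in (0:ℝ)..s,
        Falpha α (s - r) * (Real.sqrt (4 * Real.pi * (s - r)))⁻¹)
      (nhdsWithin 0 (Set.Ioi 0))
      (nhds (∫ s in (0:ℝ)..t, ∫ r in (0:ℝ)..s, (Real.sqrt (4 * Real.pi * (s - r)))⁻¹)) ∧
    (∫ s in (0:ℝ)..t, ∫ r in (0:ℝ)..s, (Real.sqrt (4 * Real.pi * (s - r)))⁻¹)
      = (2 / (3 * Real.sqrt Real.pi)) * t ^ ((3:ℝ)/2) ∧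
    ∀ ρ ∈ Set.Icc (0:ℝ) 1,
      Filter.Tendsto (fun α : ℝ =>
          (4 / 3) * (ρ * (1 - ρ) / Real.sqrt Real.pi) * t ^ ((3:ℝ)/2)
            + 2 * (ρ * (1 - ρ)) * ∫ s in (0:ℝ)..t, ∫ r in (0:ℝ)..s,
                Falpha α (s - r) * (Real.sqrt (4 * Real.pi * (s - r)))⁻¹)
        (nhdsWithin 0 (Set.Ioi 0))
        (nhds ((8 / 3) * (ρ * (1 - ρ) / Real.sqrt Real.pi) * t ^ ((3:ℝ)/2))) := by
  have hπ : (0:ℝ) < Real.sqrt π := Real.sqrt_pos.2 pi_pos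
  set h : ℝ → ℝ := fun u => (Real.sqrt (4 * π * u))⁻¹ with hh_def
  have h_nonneg : ∀ u, 0 ≤ h u := fun u => by positivity
  have hsq : ∀ u : ℝ, 0 ≤ u → Real.sqrt (4 * π * u) = 2 * Real.sqrt π * Real.sqrt u := by
    intro u hu
    rw [show 4*π*u = 4*(π*u) by ring, sqrt_four_mul _ (by positivity),
      Real.sqrt_mul pi_pos.le]
    ring
  have h_eq : ∀ u : ℝ, 0 ≤ u → h u = (2 * Real.sqrt π)⁻¹ * u ^ (-(1/2) : ℝ) := by
    intro u hu
    rcases eq_or_lt_of_le hu with h0 | h0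
    · rw [hh_def, ← h0]
      simp [Real.zero_rpow (by norm_num : (-(1/2):ℝ) ≠ 0)]
    · rw [hh_def]
      simp only
      rw [hsq u hu, mul_inv]
      congr 1
      rw [Real.rpow_neg hu, ← Real.sqrt_eq_rpow]
  -- interval integrability of h
  have h_ion : ∀ s : ℝ, 0 ≤ s → IntegrableOn h (Set.Ioc 0 s) := by
    intro s hs
    have base : IntervalIntegrable (fun u:ℝ => (2 * Real.sqrt π)⁻¹ * u ^ (-(1/2):ℝ))
        volume 0 s := (intervalIntegral.intervalIntegrable_rpow' (by norm_num)).const_mul _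
    rw [intervalIntegrable_iff_integrableOn_Ioc_of_le hs] at base
    exact base.congr_fun (fun u hu => (h_eq u hu.1.le).symm) measurableSet_Ioc
  have h_ii : ∀ s : ℝ, 0 ≤ s → IntervalIntegrable h volume 0 s := fun s hs =>
    (intervalIntegrable_iff_integrableOn_Ioc_of_le hs).2 (h_ion s hs)
  -- integrability of k α
  set k : ℝ → ℝ → ℝ := fun α u => Falpha α u * h u with hk_def
  have k_ion : ∀ α : ℝ, 0 ≤ α → ∀ s : ℝ, 0 ≤ s → IntegrableOn (k α) (Set.Ioc 0 s) := by
    intro α hα s hs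
    apply (h_ion s hs).mono'
      (((measurable_Falpha α).mul (by fun_prop : Measurable h)).aestronglyMeasurable)
    filter_upwards [ae_restrict_mem measurableSet_Ioc] with u hu
    rw [Real.norm_eq_abs, Pi.mul_apply, abs_of_nonneg (mul_nonneg (Falpha_nonneg hu.1.le) (h_nonneg u))]
    exact mul_le_of_le_one_left (h_nonneg u) (Falpha_le_one hα hu.1.le)
  have k_ii : ∀ α : ℝ, 0 ≤ α → ∀ s : ℝ, 0 ≤ s → IntervalIntegrable (k α) volume 0 s :=
    fun α hα s hs => (intervalIntegrable_iff_integrableOn_Ioc_of_le hs).2 (k_ion α hα s hs)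
  -- primitives
  set K : ℝ → ℝ → ℝ := fun α s => ∫ u in (0:ℝ)..s, k α u with hK_def
  set H : ℝ → ℝ := fun s => ∫ u in (0:ℝ)..s, h u with hH_def
  have prim_ii : ∀ f : ℝ → ℝ, IntegrableOn f (Set.Ioc 0 t) →
      IntervalIntegrable (fun s => ∫ u in (0:ℝ)..s, f u) volume 0 t := by
    intro f hf
    have hicc : IntegrableOn f (Set.uIcc 0 t) := by
      rw [Set.uIcc_of_le ht.le, integrableOn_Icc_iff_integrableOn_Ioc]
      exact hf
    exact (intervalIntegral.continuousOn_primitive_interval hicc).intervalIntegrable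
  have K_ii : ∀ α : ℝ, 0 ≤ α → IntervalIntegrable (K α) volume 0 t :=
    fun α hα => prim_ii (k α) (k_ion α hα t ht.le)
  have H_ii : IntervalIntegrable H volume 0 t := prim_ii h (h_ion t ht.le)
  -- rewriting the double integrals
  have hBeq : (∫ s in (0:ℝ)..t, ∫ r in (0:ℝ)..s, (Real.sqrt (4 * π * (s - r)))⁻¹)
      = ∫ s in (0:ℝ)..t, H s := by
    apply intervalIntegral.integral_congr
    intro s _
    have e := intervalIntegral.integral_comp_sub_left (a := 0) (b := s) h s
    simp only [sub_self, sub_zero] at e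
    exact e
  have hAeq : ∀ α : ℝ, (∫ s in (0:ℝ)..t, ∫ r in (0:ℝ)..s,
      Falpha α (s - r) * (Real.sqrt (4 * π * (s - r)))⁻¹) = ∫ s in (0:ℝ)..t, K α s := by
    intro α
    apply intervalIntegral.integral_congr
    intro s _
    have e := intervalIntegral.integral_comp_sub_left (a := 0) (b := s) (k α) s
    simp only [sub_self, sub_zero] at e
    exact e
  -- value of H
  have hHval : ∀ s : ℝ, 0 ≤ s → H s = (Real.sqrt π)⁻¹ * s ^ ((1:ℝ)/2) := by
    intro s hs
    rw [hH_def]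
    simp only
    rw [intervalIntegral.integral_congr (g := fun u => (2 * Real.sqrt π)⁻¹ * u ^ (-(1/2):ℝ))
      (fun u hu => h_eq u (by rw [Set.uIcc_of_le hs] at hu; exact hu.1)),
      intervalIntegral.integral_const_mul, integral_rpow (Or.inl (by norm_num))]
    rw [show (-(1/2) + 1 : ℝ) = 1/2 by norm_num, Real.zero_rpow (by norm_num : ((1:ℝ)/2) ≠ 0)]
    field_simp
    ring
  -- the value of B
  have hBval : (∫ s in (0:ℝ)..t, H s) = (2 / (3 * Real.sqrt π)) * t ^ ((3:ℝ)/2) := by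
    rw [intervalIntegral.integral_congr (g := fun s => (Real.sqrt π)⁻¹ * s ^ ((1:ℝ)/2))
      (fun s hs => hHval s (by rw [Set.uIcc_of_le ht.le] at hs; exact hs.1)),
      intervalIntegral.integral_const_mul, integral_rpow (Or.inl (by norm_num))]
    rw [show ((1:ℝ)/2 + 1 : ℝ) = 3/2 by norm_num,
      Real.zero_rpow (by norm_num : ((3:ℝ)/2) ≠ 0)]
    rw [show ((3:ℝ)/2 : ℝ) = (3:ℝ)/2 by norm_num]
    field_simp
    ring
  -- pointwise bounds on K
  have hK_le : ∀ α : ℝ, 0 ≤ α → ∀ s ∈ Set.Icc (0:ℝ) t, K α s ≤ H s := by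
    intro α hα s hs
    apply intervalIntegral.integral_mono_on hs.1 (k_ii α hα s hs.1) (h_ii s hs.1)
    intro u hu
    exact mul_le_of_le_one_left (h_nonneg u) (Falpha_le_one hα hu.1)
  have hK_ge : ∀ α : ℝ, 0 ≤ α → ∀ s ∈ Set.Icc (0:ℝ) t, H s - α * s ≤ K α s := by
    intro α hα s hs
    have key : H s - K α s ≤ α * s := by
      have e1 : H s - K α s = ∫ u in (0:ℝ)..s, (h u - k α u) :=
        (intervalIntegral.integral_sub (h_ii s hs.1) (k_ii α hα s hs.1)).symm
      rw [e1]
      have e2 : (∫ u in (0:ℝ)..s, (α:ℝ)) = α * s := by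
        simp [mul_comm]
      rw [← e2]
      apply intervalIntegral.integral_mono_on hs.1
        ((h_ii s hs.1).sub (k_ii α hα s hs.1)) intervalIntegrable_const
      intro u hu
      rcases eq_or_lt_of_le hu.1 with h0 | h0
      · have hz : h u = 0 := by
          rw [hh_def]; simp [← h0]
        simp [hk_def, hz, hα]
      · have hF := Falpha_ge hα h0
        have hup : Real.sqrt (4*π*u) = 2 * Real.sqrt π * Real.sqrt u := hsq u h0.le
        have hsu : 0 < Real.sqrt u := Real.sqrt_pos.2 h0
        have hb : h u * (2 * Real.sqrt π * Real.sqrt u) = 1 := by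
          rw [hh_def]
          simp only
          rw [hup]
          field_simp
        have hhu := h_nonneg u
        calc h u - k α u = h u * (1 - Falpha α u) := by rw [hk_def]; ring
        _ ≤ h u * (2 * Real.sqrt π * α * Real.sqrt u) := by
            apply mul_le_mul_of_nonneg_left _ hhu
            linarith
        _ = α * (h u * (2 * Real.sqrt π * Real.sqrt u)) := by ring
        _ = α := by rw [hb]; ring
    linarith
  -- integrated bounds
  have hA_le : ∀ α : ℝ, 0 ≤ α → (∫ s in (0:ℝ)..t, K α s) ≤ ∫ s in (0:ℝ)..t, H s := by
    intro α hα
    exact intervalIntegral.integral_mono_on ht.le (K_ii α hα) H_ii (hK_le α hα)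
  have hA_ge : ∀ α : ℝ, 0 ≤ α →
      (∫ s in (0:ℝ)..t, H s) - α * (t^2/2) ≤ ∫ s in (0:ℝ)..t, K α s := by
    intro α hα
    have key : (∫ s in (0:ℝ)..t, H s) - (∫ s in (0:ℝ)..t, K α s) ≤ α * (t^2/2) := by
      have e1 : (∫ s in (0:ℝ)..t, H s) - (∫ s in (0:ℝ)..t, K α s)
          = ∫ s in (0:ℝ)..t, (H s - K α s) :=
        (intervalIntegral.integral_sub H_ii (K_ii α hα)).symm
      rw [e1]
      have e2 : (∫ s in (0:ℝ)..t, α * s) = α * (t^2/2) := by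
        rw [intervalIntegral.integral_const_mul, integral_id]
        ring
      rw [← e2]
      apply intervalIntegral.integral_mono_on ht.le (H_ii.sub (K_ii α hα))
        ((continuous_const.mul continuous_id).intervalIntegrable _ _)
      intro s hs
      have := hK_ge α hα s hs
      simp only [Pi.mul_apply, id_eq]
      linarith
    linarith
  -- the limit
  have hmain : Filter.Tendsto (fun α : ℝ => ∫ s in (0:ℝ)..t, K α s)
      (nhdsWithin 0 (Set.Ioi 0)) (nhds (∫ s in (0:ℝ)..t, H s)) := by
    have hid : Filter.Tendsto (fun α : ℝ => α) (nhdsWithin 0 (Set.Ioi 0)) (nhds 0) :=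
      tendsto_id.mono_left nhdsWithin_le_nhds
    apply tendsto_of_tendsto_of_tendsto_of_le_of_le'
      (g := fun α : ℝ => (∫ s in (0:ℝ)..t, H s) - α * (t^2/2))
      (h := fun _ : ℝ => (∫ s in (0:ℝ)..t, H s))
    · have : Filter.Tendsto (fun α : ℝ => (∫ s in (0:ℝ)..t, H s) - α * (t^2/2))
          (nhdsWithin 0 (Set.Ioi 0)) (nhds ((∫ s in (0:ℝ)..t, H s) - 0 * (t^2/2))) :=
        tendsto_const_nhds.sub (hid.mul_const _)
      simpa using this
    · exact tendsto_const_nhds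
    · filter_upwards [eventually_mem_nhdsWithin] with α hα
      exact hA_ge α (le_of_lt hα)
    · filter_upwards [eventually_mem_nhdsWithin] with α hα
      exact hA_le α (le_of_lt hα)
  have part1 : Filter.Tendsto (fun α : ℝ => ∫ s in (0:ℝ)..t, ∫ r in (0:ℝ)..s,
      Falpha α (s - r) * (Real.sqrt (4 * π * (s - r)))⁻¹)
      (nhdsWithin 0 (Set.Ioi 0))
      (nhds (∫ s in (0:ℝ)..t, ∫ r in (0:ℝ)..s, (Real.sqrt (4 * π * (s - r)))⁻¹)) := by
    simp only [hAeq, hBeq]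
    exact hmain
  have part2 : (∫ s in (0:ℝ)..t, ∫ r in (0:ℝ)..s, (Real.sqrt (4 * π * (s - r)))⁻¹)
      = (2 / (3 * Real.sqrt π)) * t ^ ((3:ℝ)/2) := by
    rw [hBeq, hBval]
  refine ⟨part1, part2, ?_⟩
  intro ρ _
  have lim2 : Filter.Tendsto (fun α : ℝ =>
      (4 / 3) * (ρ * (1 - ρ) / Real.sqrt π) * t ^ ((3:ℝ)/2)
        + 2 * (ρ * (1 - ρ)) * ∫ s in (0:ℝ)..t, ∫ r in (0:ℝ)..s,
            Falpha α (s - r) * (Real.sqrt (4 * π * (s - r)))⁻¹)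
      (nhdsWithin 0 (Set.Ioi 0))
      (nhds ((4 / 3) * (ρ * (1 - ρ) / Real.sqrt π) * t ^ ((3:ℝ)/2)
        + 2 * (ρ * (1 - ρ)) * ((2 / (3 * Real.sqrt π)) * t ^ ((3:ℝ)/2)))) := by
    apply Filter.Tendsto.const_add
    apply Filter.Tendsto.const_mul
    rw [← part2]
    exact part1
  have : (4 / 3) * (ρ * (1 - ρ) / Real.sqrt π) * t ^ ((3:ℝ)/2)
      + 2 * (ρ * (1 - ρ)) * ((2 / (3 * Real.sqrt π)) * t ^ ((3:ℝ)/2))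
      = (8 / 3) * (ρ * (1 - ρ) / Real.sqrt π) * t ^ ((3:ℝ)/2) := by
    field_simp
    ring
  rw [← this]
  exact lim2
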